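/- arXiv:2512.24580 — 4 statements merged into one kernel-verified Lean document; each statement's English description precedes it below -/
import Mathlib

section
/- For any K-dimensional Dirichlet parameter α with all entries positive and any vector m of nonnegative integers, there exists a coupling (Y, Z) with Y ~ Dirichlet(α) and Z ~ Dirichlet(α + m) such that E[∑_{i=1}^K |Y_i - Z_i|] ≤ 2·ln(1 + (∑_i m_i)/(∑_i α_i)). Equivalently, the 1-Wasserstein distance between Dirichlet(α) and Dirichlet(α+m) with respect to the ℓ¹ cost is at most 2·ln(1 + (∑_i m_i)/(∑_i α_i)). -/
open MeasureTheory ProbabilityTheory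
open scoped ENNReal

section AuxLemmas
open Real Set

lemma betaIntegrable {a b u : ℝ} (ha : 0 < a) (hb : 0 < b) (hu : 0 < u) :
    IntervalIntegrable (fun t => t ^ (a - 1) * (u - t) ^ (b - 1)) volume 0 u := by
  have h1 : IntervalIntegrable (fun t : ℝ => t ^ (a - 1) * (u - t) ^ (b - 1))
      volume 0 (u / 2) := by
    apply (intervalIntegral.intervalIntegrable_rpow' (by linarith)).mul_continuousOn
    apply ContinuousOn.rpow_const (by fun_prop)
    intro t ht
    left
    rw [uIcc_of_le (by linarith)] at ht
    have := ht.2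
    intro hc
    nlinarith [ht.1, ht.2]
  have h2 : IntervalIntegrable (fun t : ℝ => t ^ (a - 1) * (u - t) ^ (b - 1))
      volume (u / 2) u := by
    have base : IntervalIntegrable (fun x : ℝ => x ^ (b - 1)) volume 0 (u / 2) :=
      intervalIntegral.intervalIntegrable_rpow' (by linarith)
    have comp := base.comp_sub_left u
    -- comp : IntervalIntegrable (fun x => (u - x) ^ (b-1)) volume (u - 0) (u - u/2)
    have comp' : IntervalIntegrable (fun x : ℝ => (u - x) ^ (b - 1)) volume (u / 2) u := by
      have : u - u / 2 = u / 2 := by ring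
      rw [sub_zero, this] at comp
      exact comp.symm
    have := comp'.mul_continuousOn (g := fun t : ℝ => t ^ (a - 1)) ?_
    · simpa [mul_comm] using this
    · apply ContinuousOn.rpow_const (by fun_prop)
      intro t ht
      left
      rw [uIcc_of_le (by linarith)] at ht
      intro hc
      nlinarith [ht.1, ht.2]
  exact h1.trans h2

lemma integral_beta {a b u : ℝ} (ha : 0 < a) (hb : 0 < b) (hu : 0 < u) :
    ∫ t in (0:ℝ)..u, t ^ (a - 1) * (u - t) ^ (b - 1)
      = Gamma a * Gamma b / Gamma (a + b) * u ^ (a + b - 1) := by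
  have h := Complex.betaIntegral_scaled (a : ℂ) (b : ℂ) hu
  have hbeta : Complex.betaIntegral (a : ℂ) (b : ℂ)
      = ((Gamma a * Gamma b / Gamma (a + b) : ℝ) : ℂ) := by
    have h2 := Complex.Gamma_mul_Gamma_eq_betaIntegral (s := (a : ℂ)) (t := (b : ℂ))
      (by simpa using ha) (by simpa using hb)
    have hcast : ((a : ℂ) + b) = ((a + b : ℝ) : ℂ) := by push_cast; ring
    have hne : Complex.Gamma ((a : ℂ) + b) ≠ 0 := by
      rw [hcast, Complex.Gamma_ofReal]
      exact_mod_cast (Real.Gamma_pos_of_pos (by linarith)).ne'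
    rw [hcast, Complex.Gamma_ofReal, Complex.Gamma_ofReal, Complex.Gamma_ofReal] at h2
    have hne' : (Real.Gamma (a + b) : ℂ) ≠ 0 := by
      exact_mod_cast (Real.Gamma_pos_of_pos (by linarith : (0:ℝ) < a + b)).ne'
    push_cast
    rw [eq_div_iff hne']
    linear_combination -h2
  -- rewrite integrand as ofReal
  have hInt : (∫ x in (0:ℝ)..u, (x : ℂ) ^ ((a : ℂ) - 1) * ((u : ℂ) - x) ^ ((b : ℂ) - 1))
      = ((∫ t in (0:ℝ)..u, t ^ (a - 1) * (u - t) ^ (b - 1) : ℝ) : ℂ) := by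
    rw [← intervalIntegral.integral_ofReal]
    apply intervalIntegral.integral_congr
    intro x hx
    rw [uIcc_of_le hu.le] at hx
    show (x:ℂ) ^ ((a:ℂ) - 1) * ((u:ℂ) - (x:ℂ)) ^ ((b:ℂ) - 1)
      = ((x ^ (a - 1) * (u - x) ^ (b - 1) : ℝ) : ℂ)
    rw [Complex.ofReal_mul, Complex.ofReal_cpow hx.1, Complex.ofReal_cpow (by linarith [hx.1, hx.2] : (0:ℝ) ≤ u - x)]
    push_cast
    ring
  have hrhs : ((u : ℂ) ^ ((a : ℂ) + b - 1)) = ((u ^ (a + b - 1) : ℝ) : ℂ) := by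
    rw [Complex.ofReal_cpow hu.le]
    push_cast
    ring
  rw [hInt, hrhs, hbeta, ← Complex.ofReal_mul, mul_comm] at h
  exact_mod_cast h

lemma measurable_gammaPDF (a r : ℝ) : Measurable (gammaPDF a r) :=
  ENNReal.measurable_ofReal.comp (measurable_gammaPDFReal a r)

lemma gammaPDF_one_of_pos {a x : ℝ} (hx : 0 < x) :
    gammaPDF a 1 x = ENNReal.ofReal ((Gamma a)⁻¹ * x ^ (a - 1) * exp (-x)) := by
  rw [gammaPDF_of_nonneg hx.le]
  norm_num [Real.one_rpow]

lemma ae_ne_zero : ∀ᵐ t : ℝ ∂volume, t ≠ 0 := by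
  rw [ae_iff]
  simp [(by ext t; simp : {t : ℝ | ¬ t ≠ 0} = {0})]

lemma ae_ne (c : ℝ) : ∀ᵐ t : ℝ ∂volume, t ≠ c := by
  rw [ae_iff]
  simp [(by ext t; simp : {t : ℝ | ¬ t ≠ c} = {c})]

lemma gammaPDF_conv {a b : ℝ} (ha : 0 < a) (hb : 0 < b) {u : ℝ} (hu : u ≠ 0) :
    ∫⁻ t, gammaPDF a 1 t * gammaPDF b 1 (u - t) = gammaPDF (a + b) 1 u := by
  rcases lt_or_gt_of_ne hu with h | h
  · have hz : ∀ t, gammaPDF a 1 t * gammaPDF b 1 (u - t) = 0 := by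
      intro t
      rcases lt_or_ge t 0 with ht | ht
      · rw [gammaPDF_of_neg ht, zero_mul]
      · rw [gammaPDF_of_neg (x := u - t) (by linarith), mul_zero]
    simp [hz, gammaPDF_of_neg h]
  · have hcong : (fun t => gammaPDF a 1 t * gammaPDF b 1 (u - t))
        =ᵐ[volume] (Ioo 0 u).indicator (fun t => ENNReal.ofReal
          ((Gamma a)⁻¹ * (Gamma b)⁻¹ * exp (-u) * (t ^ (a - 1) * (u - t) ^ (b - 1)))) := by
      filter_upwards [ae_ne_zero, ae_ne u] with t ht0 htu
      by_cases hmem : t ∈ Ioo 0 u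
      · rw [indicator_of_mem hmem]
        obtain ⟨h1, h2⟩ := hmem
        rw [gammaPDF_one_of_pos h1, gammaPDF_one_of_pos (by linarith : (0:ℝ) < u - t),
          ← ENNReal.ofReal_mul (by positivity)]
        congr 1
        have hexp : exp (-t) * exp (-(u - t)) = exp (-u) := by
          rw [← Real.exp_add]; congr 1; ring
        linear_combination ((Gamma a)⁻¹ * (Gamma b)⁻¹ * (t ^ (a - 1) * (u - t) ^ (b - 1))) * hexp
      · rw [indicator_of_notMem hmem]
        rw [mem_Ioo, not_and_or] at hmem
        rcases hmem with h1 | h2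
        · have : t < 0 := lt_of_le_of_ne (not_lt.mp h1) ht0
          rw [gammaPDF_of_neg this, zero_mul]
        · have : u - t < 0 := by
            have := not_lt.mp h2
            have : u < t := lt_of_le_of_ne (not_lt.mp h2) (Ne.symm htu)
            linarith
          rw [gammaPDF_of_neg this, mul_zero]
    rw [lintegral_congr_ae hcong, lintegral_indicator measurableSet_Ioo]
    have hIntOn : IntegrableOn
        (fun t => (Gamma a)⁻¹ * (Gamma b)⁻¹ * exp (-u) * (t ^ (a - 1) * (u - t) ^ (b - 1)))
        (Ioo 0 u) volume := by
      apply Integrable.const_mul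
      exact ((betaIntegrable ha hb h).1.mono_set Ioo_subset_Ioc_self)
    rw [← ofReal_integral_eq_lintegral_ofReal hIntOn ?_]
    · rw [integral_const_mul, ← integral_Ioc_eq_integral_Ioo,
        ← intervalIntegral.integral_of_le h.le, integral_beta ha hb h,
        gammaPDF_of_nonneg h.le]
      congr 1
      have hGa := Real.Gamma_pos_of_pos ha
      have hGb := Real.Gamma_pos_of_pos hb
      rw [Real.one_rpow]
      field_simp
    · filter_upwards [ae_restrict_mem measurableSet_Ioo] with t ht
      have h1 : (0:ℝ) ≤ t ^ (a - 1) := rpow_nonneg ht.1.le _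
      have h2 : (0:ℝ) ≤ (u - t) ^ (b - 1) := rpow_nonneg (by linarith [ht.2] : (0:ℝ) ≤ u - t) _
      have hGa := (Real.Gamma_pos_of_pos ha).le
      have hGb := (Real.Gamma_pos_of_pos hb).le
      positivity

lemma gammaMeasure_conv {a b : ℝ} (ha : 0 < a) (hb : 0 < b) :
    ((gammaMeasure a 1).prod (gammaMeasure b 1)).map (fun p : ℝ × ℝ => p.1 + p.2)
      = gammaMeasure (a + b) 1 := by
  have hfa := measurable_gammaPDF a 1
  have hfb := measurable_gammaPDF b 1
  haveI := isProbabilityMeasure_gammaMeasure ha one_pos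
  haveI := isProbabilityMeasure_gammaMeasure hb one_pos
  ext s hs
  have hind : Measurable (s.indicator (1 : ℝ → ℝ≥0∞)) := measurable_one.indicator hs
  have hindp : Measurable fun p : ℝ × ℝ => s.indicator (1 : ℝ → ℝ≥0∞) (p.1 + p.2) :=
    hind.comp (measurable_fst.add measurable_snd)
  rw [Measure.map_apply (show Measurable fun p : ℝ × ℝ => p.1 + p.2 from measurable_fst.add measurable_snd) hs]
  have hps : MeasurableSet ((fun p : ℝ × ℝ => p.1 + p.2) ⁻¹' s) :=
    (measurable_fst.add measurable_snd) hs
  have step1 : ((gammaMeasure a 1).prod (gammaMeasure b 1)) ((fun p : ℝ × ℝ => p.1 + p.2) ⁻¹' s)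
      = ∫⁻ t, gammaPDF a 1 t * ∫⁻ e, gammaPDF b 1 e * s.indicator 1 (t + e) ∂volume ∂volume := by
    rw [← lintegral_indicator_one hps]
    have h0 : (∫⁻ p, ((fun p : ℝ × ℝ => p.1 + p.2) ⁻¹' s).indicator 1 p
          ∂(gammaMeasure a 1).prod (gammaMeasure b 1))
        = ∫⁻ p : ℝ × ℝ, s.indicator 1 (p.1 + p.2)
          ∂(gammaMeasure a 1).prod (gammaMeasure b 1) := by
      refine lintegral_congr fun p => ?_
      by_cases hp : p.1 + p.2 ∈ s <;>
        simp [Set.indicator_apply, Set.mem_preimage, hp]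
    rw [h0, lintegral_prod _ hindp.aemeasurable]
    have hinner : Measurable fun t : ℝ =>
        ∫⁻ e, s.indicator (1 : ℝ → ℝ≥0∞) (t + e) ∂(volume.withDensity (gammaPDF b 1)) := by
      refine Measurable.lintegral_prod_right (f := fun t e => s.indicator 1 (t + e)) ?_
      exact hindp
    rw [show (∫⁻ x, ∫⁻ y, s.indicator (1 : ℝ → ℝ≥0∞) ((x, y).1 + (x, y).2)
          ∂(gammaMeasure b 1) ∂(gammaMeasure a 1))
        = ∫⁻ t, ∫⁻ e, s.indicator (1 : ℝ → ℝ≥0∞) (t + e)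
          ∂(volume.withDensity (gammaPDF b 1)) ∂(volume.withDensity (gammaPDF a 1)) from rfl]
    rw [lintegral_withDensity_eq_lintegral_mul _ hfa hinner]
    refine lintegral_congr fun t => ?_
    simp only [Pi.mul_apply]
    congr 1
    have hint : Measurable fun e : ℝ => s.indicator (1 : ℝ → ℝ≥0∞) (t + e) :=
      hind.comp (measurable_const.add measurable_id)
    rw [lintegral_withDensity_eq_lintegral_mul _ hfb hint]
    rfl
  have step2 : ∀ t : ℝ, (∫⁻ e, gammaPDF b 1 e * s.indicator 1 (t + e) ∂volume)
      = ∫⁻ w, gammaPDF b 1 (w - t) * s.indicator 1 w ∂volume := by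
    intro t
    have h := lintegral_add_right_eq_self (μ := volume)
      (fun w => gammaPDF b 1 (w - t) * s.indicator 1 w) t
    calc (∫⁻ e, gammaPDF b 1 e * s.indicator 1 (t + e) ∂volume)
        = ∫⁻ x, gammaPDF b 1 (x + t - t) * s.indicator 1 (x + t) ∂volume := by
          refine lintegral_congr fun x => ?_
          rw [add_sub_cancel_right, add_comm]
      _ = ∫⁻ w, gammaPDF b 1 (w - t) * s.indicator 1 w ∂volume := h
  simp_rw [step1, step2]
  have hmeas2 : Measurable fun q : ℝ × ℝ =>
      gammaPDF a 1 q.1 * (gammaPDF b 1 (q.2 - q.1) * s.indicator 1 q.2) :=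
    (hfa.comp measurable_fst).mul
      (((hfb.comp (measurable_snd.sub measurable_fst))).mul (hind.comp measurable_snd))
  calc (∫⁻ t, gammaPDF a 1 t * ∫⁻ w, gammaPDF b 1 (w - t) * s.indicator 1 w ∂volume ∂volume)
      = ∫⁻ t, ∫⁻ w, gammaPDF a 1 t * (gammaPDF b 1 (w - t) * s.indicator 1 w) ∂volume ∂volume := by
        refine lintegral_congr fun t => ?_
        have hm : Measurable fun w : ℝ => gammaPDF b 1 (w - t) * s.indicator 1 w :=
          (hfb.comp (measurable_id.sub measurable_const)).mul hind
        exact (lintegral_const_mul _ hm).symm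
    _ = ∫⁻ w, ∫⁻ t, gammaPDF a 1 t * (gammaPDF b 1 (w - t) * s.indicator 1 w) ∂volume ∂volume :=
        lintegral_lintegral_swap hmeas2.aemeasurable
    _ = ∫⁻ w, (∫⁻ t, gammaPDF a 1 t * gammaPDF b 1 (w - t) ∂volume) * s.indicator 1 w ∂volume := by
        refine lintegral_congr fun w => ?_
        simp_rw [← mul_assoc]
        have hm : Measurable fun t : ℝ => gammaPDF a 1 t * gammaPDF b 1 (w - t) :=
          hfa.mul (hfb.comp (measurable_const.sub measurable_id))
        exact lintegral_mul_const _ hm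
    _ = ∫⁻ w, gammaPDF (a + b) 1 w * s.indicator 1 w ∂volume := by
        refine lintegral_congr_ae ?_
        filter_upwards [ae_ne_zero] with w hw
        rw [gammaPDF_conv ha hb hw]
    _ = gammaMeasure (a + b) 1 s := by
        rw [gammaMeasure, withDensity_apply _ hs, ← lintegral_indicator hs]
        refine lintegral_congr fun w => ?_
        by_cases hw : w ∈ s <;> simp [hw]

/-- Gamma measure extended to parameter `0` by a point mass at `0`. -/
noncomputable def nnGamma (c : ℝ) : Measure ℝ :=
  if c = 0 then Measure.dirac 0 else gammaMeasure c 1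

lemma nnGamma_of_pos {c : ℝ} (hc : 0 < c) : nnGamma c = gammaMeasure c 1 :=
  if_neg hc.ne'

lemma isProbabilityMeasure_nnGamma {c : ℝ} (hc : 0 ≤ c) :
    IsProbabilityMeasure (nnGamma c) := by
  unfold nnGamma
  split_ifs with h
  · infer_instance
  · exact isProbabilityMeasure_gammaMeasure (lt_of_le_of_ne hc (Ne.symm h)) one_pos

lemma nnGamma_conv {a b : ℝ} (ha : 0 ≤ a) (hb : 0 ≤ b) :
    ((nnGamma a).prod (nnGamma b)).map (fun p : ℝ × ℝ => p.1 + p.2) = nnGamma (a + b) := by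
  haveI := isProbabilityMeasure_nnGamma ha
  haveI := isProbabilityMeasure_nnGamma hb
  rcases eq_or_lt_of_le ha with ha0 | ha0
  · rw [show nnGamma a = Measure.dirac 0 by rw [← ha0]; exact if_pos rfl,
      Measure.dirac_prod, Measure.map_map (show Measurable fun p : ℝ × ℝ => p.1 + p.2 from measurable_fst.add measurable_snd)
        (measurable_prodMk_left), ← ha0, zero_add]
    have : ((fun p : ℝ × ℝ => p.1 + p.2) ∘ Prod.mk (0:ℝ)) = fun y : ℝ => 0 + y := rfl
    rw [this]
    simp only [zero_add]
    exact Measure.map_id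
  rcases eq_or_lt_of_le hb with hb0 | hb0
  · rw [show nnGamma b = Measure.dirac 0 by rw [← hb0]; exact if_pos rfl,
      Measure.prod_dirac, Measure.map_map (show Measurable fun p : ℝ × ℝ => p.1 + p.2 from measurable_fst.add measurable_snd)
        measurable_prodMk_right, ← hb0, add_zero]
    have : ((fun p : ℝ × ℝ => p.1 + p.2) ∘ fun x : ℝ => (x, (0:ℝ))) = fun y : ℝ => y + 0 := rfl
    rw [this]
    simp only [add_zero]
    exact Measure.map_id
  · rw [nnGamma_of_pos ha0, nnGamma_of_pos hb0, nnGamma_of_pos (by linarith),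
      gammaMeasure_conv ha0 hb0]

lemma nnGamma_sumPi : ∀ {n : ℕ} (c : Fin n → ℝ), (∀ i, 0 ≤ c i) →
    (Measure.pi fun i => nnGamma (c i)).map (fun g => ∑ i, g i) = nnGamma (∑ i, c i) := by
  intro n
  induction n with
  | zero =>
    intro c hc
    rw [Measure.pi_of_empty, Measure.map_dirac' (by fun_prop)]
    simp [nnGamma]
  | succ n ih =>
    intro c hc
    haveI : ∀ i, IsProbabilityMeasure (nnGamma (c i)) :=
      fun i => isProbabilityMeasure_nnGamma (hc i)
    have hmp := measurePreserving_piFinSuccAbove (fun i => nnGamma (c i)) 0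
    have hsum : (fun g : Fin (n+1) → ℝ => ∑ i, g i)
        = (fun p : ℝ × (Fin n → ℝ) => p.1 + ∑ j, p.2 j)
          ∘ (MeasurableEquiv.piFinSuccAbove (fun _ : Fin (n+1) => ℝ) 0) := by
      funext g
      simp only [Function.comp_apply, MeasurableEquiv.piFinSuccAbove_apply]
      rw [Fin.sum_univ_succ]
      congr 1
    rw [hsum, ← Measure.map_map (by fun_prop) (MeasurableEquiv.measurable _), hmp.map_eq]
    have hcomp : (fun p : ℝ × (Fin n → ℝ) => p.1 + ∑ j, p.2 j)
        = (fun p : ℝ × ℝ => p.1 + p.2) ∘ (Prod.map id (fun y : Fin n → ℝ => ∑ j, y j)) := rfl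
    have hsumnn : (0:ℝ) ≤ ∑ j : Fin n, c (Fin.succAbove 0 j) :=
      Finset.sum_nonneg fun j _ => hc _
    haveI : IsProbabilityMeasure (Measure.pi fun j : Fin n => nnGamma (c (Fin.succAbove 0 j))) := by
      infer_instance
    rw [hcomp, ← Measure.map_map (show Measurable fun p : ℝ × ℝ => p.1 + p.2 from measurable_fst.add measurable_snd) (by fun_prop),
      ← Measure.map_prod_map _ _ measurable_id (by fun_prop),
      Measure.map_id, ih _ (fun j => hc _), nnGamma_conv (hc 0) hsumnn]
    congr 1
    rw [Fin.sum_univ_succ]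
    rfl

lemma gammaMeasure_ae_pos {a : ℝ} (ha : 0 < a) : ∀ᵐ x ∂gammaMeasure a 1, 0 < x := by
  rw [ae_iff]
  have hset : {x : ℝ | ¬ 0 < x} = Iic 0 := by ext x; simp
  rw [hset, gammaMeasure, withDensity_apply _ measurableSet_Iic,
    Measure.restrict_congr_set Iio_ae_eq_Iic.symm]
  exact lintegral_gammaPDF_of_nonpos le_rfl

lemma nnGamma_ae_nonneg {c : ℝ} (hc : 0 ≤ c) : ∀ᵐ x ∂nnGamma c, 0 ≤ x := by
  unfold nnGamma
  split_ifs with h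
  · rw [ae_dirac_iff (show MeasurableSet {x : ℝ | 0 ≤ x} from measurableSet_Ici)]
  · filter_upwards [gammaMeasure_ae_pos (lt_of_le_of_ne hc (Ne.symm h))] with x hx
    exact hx.le

lemma ae_pi_mem {n : ℕ} (μ : Fin n → Measure ℝ) [∀ i, SigmaFinite (μ i)] {s : Set ℝ}
    (hs : MeasurableSet s) (h : ∀ i, ∀ᵐ x ∂μ i, x ∈ s) :
    ∀ᵐ g ∂Measure.pi μ, ∀ i, g i ∈ s := by
  rw [ae_all_iff]
  intro i
  rw [ae_iff]
  have hset : {g : Fin n → ℝ | ¬ g i ∈ s}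
      = Set.pi univ (fun j => if j = i then sᶜ else univ) := by
    ext g
    simp only [mem_setOf_eq, Set.mem_pi, mem_univ, forall_true_left]
    constructor
    · intro hg j
      by_cases hj : j = i
      · subst hj; simp [hg]
      · simp [hj]
    · intro hg
      have := hg i
      simpa using this
  rw [hset, Measure.pi_pi]
  apply Finset.prod_eq_zero (Finset.mem_univ i)
  have := h i
  rw [ae_iff] at this
  simpa [compl_def] using this

lemma lintegral_inv_gammaMeasure {c : ℝ} (hc : 1 < c) :
    ∫⁻ u, ENNReal.ofReal u⁻¹ ∂gammaMeasure c 1 = ENNReal.ofReal (1 / (c - 1)) := by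
  have hc0 : (0:ℝ) < c := by linarith
  have hc1 : (0:ℝ) < c - 1 := by linarith
  have hm : Measurable fun u : ℝ => ENNReal.ofReal u⁻¹ :=
    ENNReal.measurable_ofReal.comp measurable_inv
  rw [gammaMeasure, lintegral_withDensity_eq_lintegral_mul _ (measurable_gammaPDF c 1) hm]
  have hcong : (fun u => (gammaPDF c 1 * fun u => ENNReal.ofReal u⁻¹) u)
      =ᵐ[volume] (Ioi 0).indicator
        (fun u => ENNReal.ofReal ((Gamma c)⁻¹ * (exp (-u) * u ^ (c - 2)))) := by
    filter_upwards [ae_ne_zero] with u hu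
    by_cases hmem : u ∈ Ioi 0
    · have hu0 : (0:ℝ) < u := hmem
      rw [indicator_of_mem hmem]
      simp only [Pi.mul_apply]
      rw [gammaPDF_one_of_pos hu0, ← ENNReal.ofReal_mul (by positivity)]
      congr 1
      have hpow : u ^ (c - 1) * u⁻¹ = u ^ (c - 2) := by
        rw [← Real.rpow_neg_one u, ← Real.rpow_add hu0]
        congr 1
        ring
      calc (Gamma c)⁻¹ * u ^ (c - 1) * exp (-u) * u⁻¹
          = (Gamma c)⁻¹ * (exp (-u) * (u ^ (c - 1) * u⁻¹)) := by ring
        _ = (Gamma c)⁻¹ * (exp (-u) * u ^ (c - 2)) := by rw [hpow]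
    · rw [indicator_of_notMem hmem]
      have hu0 : u < 0 := lt_of_le_of_ne (not_lt.mp hmem) hu
      simp only [Pi.mul_apply]
      rw [gammaPDF_of_neg hu0, zero_mul]
  rw [lintegral_congr_ae hcong, lintegral_indicator measurableSet_Ioi]
  have hInt : IntegrableOn (fun u : ℝ => (Gamma c)⁻¹ * (exp (-u) * u ^ (c - 2))) (Ioi 0) volume := by
    apply Integrable.const_mul
    have := Real.GammaIntegral_convergent hc1
    exact (by simpa [show c - 1 - 1 = c - 2 by ring] using this :
      IntegrableOn (fun u : ℝ => exp (-u) * u ^ (c - 2)) (Ioi 0) volume)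
  rw [← ofReal_integral_eq_lintegral_ofReal hInt ?_]
  · rw [integral_const_mul]
    have : (∫ u in Ioi 0, exp (-u) * u ^ (c - 2)) = Gamma (c - 1) := by
      rw [Real.Gamma_eq_integral hc1]
      congr 1
      ext u
      congr 2
      ring
    rw [this]
    congr 1
    have hGamma : Gamma c = (c - 1) * Gamma (c - 1) := by
      have := Real.Gamma_add_one (s := c - 1) hc1.ne'
      rw [show c - 1 + 1 = c by ring] at this
      exact this
    rw [hGamma]
    have hG1 := Real.Gamma_pos_of_pos hc1
    field_simp
  · filter_upwards [ae_restrict_mem measurableSet_Ioi] with u hu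
    have : (0:ℝ) < u := hu
    have hG := (Real.Gamma_pos_of_pos hc0).le
    positivity

lemma gammaPDF_ratio_pointwise {S t : ℝ} (hS : 0 < S) (ht : 0 < t) (e : ℝ) :
    gammaPDF S 1 e * ENNReal.ofReal (e / (t + e))
      = ENNReal.ofReal S * (gammaPDF (S + 1) 1 e * ENNReal.ofReal ((t + e)⁻¹)) := by
  rcases lt_trichotomy e 0 with he | he | he
  · rw [gammaPDF_of_neg he, gammaPDF_of_neg he, zero_mul, zero_mul, mul_zero]
  · subst he
    have h0 : (0:ℝ) ^ (S + 1 - 1) = 0 :=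
      Real.zero_rpow (by intro hc; nlinarith : S + 1 - 1 ≠ 0)
    have h2 : gammaPDF (S + 1) 1 0 = 0 := by
      rw [gammaPDF_of_nonneg le_rfl, h0]
      simp
    simp [h2]
  · rw [gammaPDF_one_of_pos he, gammaPDF_one_of_pos he,
      ← ENNReal.ofReal_mul (by positivity : (0:ℝ) ≤ (Gamma S)⁻¹ * e ^ (S - 1) * exp (-e)),
      ← ENNReal.ofReal_mul (by positivity : (0:ℝ) ≤ (Gamma (S+1))⁻¹ * e ^ (S + 1 - 1) * exp (-e)),
      ← ENNReal.ofReal_mul hS.le]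
    congr 1
    have hpow : e ^ (S + 1 - 1) = e ^ (S - 1) * e := by
      rw [show S + 1 - 1 = (S - 1) + 1 by ring, Real.rpow_add_one he.ne']
    have hG : Gamma (S + 1) = S * Gamma S := Real.Gamma_add_one hS.ne'
    have hGS := Real.Gamma_pos_of_pos hS
    have hte : (0:ℝ) < t + e := by linarith
    rw [hpow, hG, div_eq_mul_inv, mul_inv]
    field_simp

lemma lintegral_ratio {A S : ℝ} (hA : 0 < A) (hS : 0 < S) :
    (∫⁻ p : ℝ × ℝ, ENNReal.ofReal (p.2 / (p.1 + p.2))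
        ∂((gammaMeasure A 1).prod (gammaMeasure S 1)))
      = ENNReal.ofReal (S / (A + S)) := by
  haveI := isProbabilityMeasure_gammaMeasure hA one_pos
  haveI := isProbabilityMeasure_gammaMeasure hS one_pos
  haveI := isProbabilityMeasure_gammaMeasure (show (0:ℝ) < S + 1 by linarith) one_pos
  have hm : Measurable fun p : ℝ × ℝ => ENNReal.ofReal (p.2 / (p.1 + p.2)) := by fun_prop
  have hminv : Measurable fun u : ℝ => ENNReal.ofReal u⁻¹ :=
    ENNReal.measurable_ofReal.comp measurable_inv
  have hminv2 : Measurable fun p : ℝ × ℝ => ENNReal.ofReal ((p.1 + p.2)⁻¹) :=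
    hminv.comp (measurable_fst.add measurable_snd)
  have houter : Measurable fun t : ℝ =>
      ∫⁻ e, ENNReal.ofReal ((t + e)⁻¹) ∂gammaMeasure (S + 1) 1 := by
    refine Measurable.lintegral_prod_right (f := fun t e => ENNReal.ofReal ((t + e)⁻¹)) ?_
    exact hminv2
  calc (∫⁻ p : ℝ × ℝ, ENNReal.ofReal (p.2 / (p.1 + p.2))
        ∂((gammaMeasure A 1).prod (gammaMeasure S 1)))
      = ∫⁻ t, ∫⁻ e, ENNReal.ofReal (e / (t + e)) ∂gammaMeasure S 1 ∂gammaMeasure A 1 :=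
        lintegral_prod _ hm.aemeasurable
    _ = ∫⁻ t, ENNReal.ofReal S *
          ∫⁻ e, ENNReal.ofReal ((t + e)⁻¹) ∂gammaMeasure (S + 1) 1 ∂gammaMeasure A 1 := by
        refine lintegral_congr_ae ?_
        filter_upwards [gammaMeasure_ae_pos hA] with t ht
        have hmt : Measurable fun e : ℝ => ENNReal.ofReal (e / (t + e)) := by fun_prop
        have hmt2 : Measurable fun e : ℝ => ENNReal.ofReal ((t + e)⁻¹) :=
          hminv.comp (measurable_const.add measurable_id)
        have hmul2 : Measurable fun e : ℝ => gammaPDF (S + 1) 1 e * ENNReal.ofReal ((t + e)⁻¹) :=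
          (measurable_gammaPDF (S + 1) 1).mul hmt2
        rw [gammaMeasure, lintegral_withDensity_eq_lintegral_mul _ (measurable_gammaPDF S 1) hmt,
          gammaMeasure, lintegral_withDensity_eq_lintegral_mul _
            (measurable_gammaPDF (S + 1) 1) hmt2]
        simp only [Pi.mul_apply]
        rw [← lintegral_const_mul _ hmul2]
        exact lintegral_congr fun e => gammaPDF_ratio_pointwise hS ht e
    _ = ENNReal.ofReal S * ∫⁻ t, ∫⁻ e, ENNReal.ofReal ((t + e)⁻¹)
          ∂gammaMeasure (S + 1) 1 ∂gammaMeasure A 1 := lintegral_const_mul _ houter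
    _ = ENNReal.ofReal S * ∫⁻ p : ℝ × ℝ, ENNReal.ofReal ((p.1 + p.2)⁻¹)
          ∂((gammaMeasure A 1).prod (gammaMeasure (S + 1) 1)) := by
        rw [lintegral_prod _ hminv2.aemeasurable]
    _ = ENNReal.ofReal S * ∫⁻ u, ENNReal.ofReal u⁻¹
          ∂(((gammaMeasure A 1).prod (gammaMeasure (S + 1) 1)).map
              (fun p : ℝ × ℝ => p.1 + p.2)) := by
        rw [lintegral_map hminv (show Measurable fun p : ℝ × ℝ => p.1 + p.2 from measurable_fst.add measurable_snd)]
    _ = ENNReal.ofReal S * ENNReal.ofReal (1 / (A + S)) := by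
        rw [gammaMeasure_conv hA (by linarith : (0:ℝ) < S + 1),
          lintegral_inv_gammaMeasure (by linarith : (1:ℝ) < A + (S + 1))]
        congr 2
        ring
    _ = ENNReal.ofReal (S / (A + S)) := by
        rw [← ENNReal.ofReal_mul hS.le, mul_one_div]

lemma key_ineq {K : ℕ} (hK : 0 < K) (g e : Fin K → ℝ) (hg : ∀ i, 0 < g i)
    (he : ∀ i, 0 ≤ e i) :
    ∑ i, |g i / (∑ j, g j) - (g i + e i) / ((∑ j, g j) + ∑ j, e j)|
      ≤ 2 * ((∑ j, e j) / ((∑ j, g j) + ∑ j, e j)) := by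
  haveI : Nonempty (Fin K) := Fin.pos_iff_nonempty.mp hK
  set T := ∑ j, g j with hTdef
  set E := ∑ j, e j with hEdef
  have hT0 : 0 < T := Finset.sum_pos (fun i _ => hg i) Finset.univ_nonempty
  have hE0 : 0 ≤ E := Finset.sum_nonneg fun i _ => he i
  have hTE : 0 < T + E := by linarith
  have step : ∀ i, |g i / T - (g i + e i) / (T + E)|
      ≤ g i * (1 / T - 1 / (T + E)) + e i / (T + E) := by
    intro i
    have h1 : g i / T - (g i + e i) / (T + E)
        = g i * (1 / T - 1 / (T + E)) - e i / (T + E) := by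
      field_simp
      ring
    rw [h1]
    have hA : 0 ≤ g i * (1 / T - 1 / (T + E)) := by
      have h2 : 1 / (T + E) ≤ 1 / T := one_div_le_one_div_of_le hT0 (by linarith)
      have := (hg i).le
      nlinarith
    have hB : 0 ≤ e i / (T + E) := div_nonneg (he i) hTE.le
    calc |g i * (1 / T - 1 / (T + E)) - e i / (T + E)|
        ≤ |g i * (1 / T - 1 / (T + E))| + |e i / (T + E)| := abs_sub _ _
      _ = g i * (1 / T - 1 / (T + E)) + e i / (T + E) := by
          rw [abs_of_nonneg hA, abs_of_nonneg hB]
  calc (∑ i, |g i / T - (g i + e i) / (T + E)|)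
      ≤ ∑ i, (g i * (1 / T - 1 / (T + E)) + e i / (T + E)) :=
        Finset.sum_le_sum fun i _ => step i
    _ = T * (1 / T - 1 / (T + E)) + E / (T + E) := by
        rw [Finset.sum_add_distrib, ← Finset.sum_mul, ← Finset.sum_div]
    _ = 2 * (E / (T + E)) := by
        field_simp
        ring
  
lemma ratio_le_log {A S : ℝ} (hA : 0 < A) (hS : 0 ≤ S) :
    S / (A + S) ≤ Real.log (1 + S / A) := by
  have hAS : 0 < A + S := by linarith
  have h1 : Real.log (A / (A + S)) ≤ A / (A + S) - 1 :=
    Real.log_le_sub_one_of_pos (by positivity)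
  have h2 : 1 + S / A = (A + S) / A := by field_simp
  have h3 : Real.log ((A + S) / A) = -Real.log (A / (A + S)) := by
    rw [← Real.log_inv]
    congr 1
    rw [inv_div]
  have h4 : A / (A + S) - 1 = -(S / (A + S)) := by
    field_simp
    ring
  rw [h2, h3]
  rw [h4] at h1
  linarith

end AuxLemmas

/-- The Dirichlet law with parameter `α` on `Fin K → ℝ`, defined as the law of the
normalized vector of independent Gamma(α i, 1) random variables. -/
noncomputable def dirichletLaw {K : ℕ} (α : Fin K → ℝ) (hα : ∀ i, 0 < α i) :
    Measure (Fin K → ℝ) :=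
  haveI : ∀ i, IsProbabilityMeasure (gammaMeasure (α i) 1) :=
    fun i => isProbabilityMeasure_gammaMeasure (hα i) one_pos
  (Measure.pi fun i => gammaMeasure (α i) 1).map
    (fun g i => g i / ∑ j, g j)

lemma dirichletLaw_congr {K : ℕ} {α β : Fin K → ℝ} (h : α = β)
    (hα : ∀ i, 0 < α i) (hβ : ∀ i, 0 < β i) : dirichletLaw α hα = dirichletLaw β hβ := by
  subst h; rfl

lemma measurable_normalize (K : ℕ) : Measurable (fun g : Fin K → ℝ => fun i => g i / ∑ j, g j) := by
  refine measurable_pi_lambda _ fun i => ?_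
  exact (measurable_pi_apply i).div (Finset.measurable_sum _ fun j _ => measurable_pi_apply j)

lemma isProbabilityMeasure_dirichletLaw {K : ℕ} (α : Fin K → ℝ) (hα : ∀ i, 0 < α i) :
    IsProbabilityMeasure (dirichletLaw α hα) := by
  haveI : ∀ i, IsProbabilityMeasure (gammaMeasure (α i) 1) :=
    fun i => isProbabilityMeasure_gammaMeasure (hα i) one_pos
  unfold dirichletLaw
  exact Measure.isProbabilityMeasure_map (measurable_normalize K).aemeasurable

lemma measurable_l1sum (K : ℕ) :
    Measurable (fun p : (Fin K → ℝ) × (Fin K → ℝ) => ∑ i, |p.1 i - p.2 i|) := by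
  refine Finset.measurable_sum _ fun i _ => ?_
  exact (((measurable_pi_apply i).comp measurable_fst).sub
    ((measurable_pi_apply i).comp measurable_snd)).abs

/-- There is a coupling of `Dirichlet(α)` and `Dirichlet(α + m)` (with `m` a vector of
nonnegative integers) whose expected `ℓ¹` distance is at most
`2 ln(1 + (∑ i m i) / (∑ i α i))`; equivalently the `ℓ¹`-Wasserstein distance between the
two Dirichlet laws is at most this bound. -/
theorem dirichlet_wasserstein_bound {K : ℕ} (hK : 0 < K)
    (α : Fin K → ℝ) (hα : ∀ i, 0 < α i) (m : Fin K → ℕ) :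
    ∃ π : Measure ((Fin K → ℝ) × (Fin K → ℝ)),
      IsProbabilityMeasure π ∧
      π.map Prod.fst = dirichletLaw α hα ∧
      π.map Prod.snd = dirichletLaw (fun i => α i + m i)
        (fun i => add_pos_of_pos_of_nonneg (hα i) (Nat.cast_nonneg _)) ∧
      (∫ p, ∑ i, |p.1 i - p.2 i| ∂π)
        ≤ 2 * Real.log (1 + (∑ i, (m i : ℝ)) / ∑ i, α i) := by
  classical
  haveI : Nonempty (Fin K) := Fin.pos_iff_nonempty.mp hK
  have hfm := measurable_l1sum K
  by_cases hm : ∀ i, m i = 0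
  · -- trivial diagonal coupling
    haveI := isProbabilityMeasure_dirichletLaw α hα
    have hdiag : Measurable fun y : Fin K → ℝ => (y, y) :=
      measurable_id.prodMk measurable_id
    refine ⟨(dirichletLaw α hα).map (fun y => (y, y)), ?_, ?_, ?_, ?_⟩
    · exact Measure.isProbabilityMeasure_map hdiag.aemeasurable
    · rw [Measure.map_map measurable_fst hdiag]
      exact Measure.map_id
    · rw [Measure.map_map measurable_snd hdiag]
      have h1 : α = (fun i => α i + (m i : ℝ)) := funext fun i => by simp [hm i]
      have h2 : Measure.map (Prod.snd ∘ fun y : Fin K → ℝ => (y, y)) (dirichletLaw α hα)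
          = dirichletLaw α hα := Measure.map_id
      rw [h2]
      exact dirichletLaw_congr h1 hα _
    · have hint : (∫ p, ∑ i, |p.1 i - p.2 i|
          ∂((dirichletLaw α hα).map (fun y => (y, y)))) = 0 := by
        rw [integral_map hdiag.aemeasurable hfm.aestronglyMeasurable]
        simp
      have hz : (∑ i, (m i : ℝ)) = 0 := by simp [hm]
      rw [hint, hz]
      simp
  · -- main case
    push_neg at hm
    obtain ⟨i₀, hi₀⟩ := hm
    have hA : 0 < ∑ i, α i := Finset.sum_pos (fun i _ => hα i) Finset.univ_nonempty
    have hS : 0 < ∑ i, (m i : ℝ) :=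
      Finset.sum_pos' (fun i _ => Nat.cast_nonneg _)
        ⟨i₀, Finset.mem_univ _, by exact_mod_cast Nat.pos_of_ne_zero hi₀⟩
    set A := ∑ i, α i
    set S := ∑ i, (m i : ℝ)
    haveI hPG : ∀ i, IsProbabilityMeasure (gammaMeasure (α i) 1) :=
      fun i => isProbabilityMeasure_gammaMeasure (hα i) one_pos
    haveI hPE : ∀ i, IsProbabilityMeasure (nnGamma (m i : ℝ)) :=
      fun i => isProbabilityMeasure_nnGamma (Nat.cast_nonneg _)
    haveI := isProbabilityMeasure_gammaMeasure hA one_pos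
    haveI := isProbabilityMeasure_gammaMeasure hS one_pos
    haveI : ∀ i, IsProbabilityMeasure (gammaMeasure (α i + (m i : ℝ)) 1) := fun i =>
      isProbabilityMeasure_gammaMeasure (add_pos_of_pos_of_nonneg (hα i) (Nat.cast_nonneg _)) one_pos
    have hnorm := measurable_normalize K
    have haddf : Measurable (fun q : (Fin K → ℝ) × (Fin K → ℝ) => fun i => q.1 i + q.2 i) :=
      measurable_pi_lambda _ fun i =>
        ((measurable_pi_apply i).comp measurable_fst).add
          ((measurable_pi_apply i).comp measurable_snd)
    have hF : Measurable (fun q : (Fin K → ℝ) × (Fin K → ℝ) =>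
        ((fun g : Fin K → ℝ => fun i => g i / ∑ j, g j) q.1,
         (fun g : Fin K → ℝ => fun i => g i / ∑ j, g j) (fun i => q.1 i + q.2 i))) :=
      (hnorm.comp measurable_fst).prodMk (hnorm.comp haddf)
    refine ⟨(((Measure.pi fun i => gammaMeasure (α i) 1).prod
        (Measure.pi fun i => nnGamma (m i : ℝ))).map
        (fun q => ((fun g : Fin K → ℝ => fun i => g i / ∑ j, g j) q.1,
         (fun g : Fin K → ℝ => fun i => g i / ∑ j, g j) (fun i => q.1 i + q.2 i)))),
      ?_, ?_, ?_, ?_⟩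
    · exact Measure.isProbabilityMeasure_map hF.aemeasurable
    · rw [Measure.map_map measurable_fst hF,
        show (Prod.fst ∘ (fun q : (Fin K → ℝ) × (Fin K → ℝ) =>
          ((fun g : Fin K → ℝ => fun i => g i / ∑ j, g j) q.1,
           (fun g : Fin K → ℝ => fun i => g i / ∑ j, g j) (fun i => q.1 i + q.2 i))))
          = ((fun g : Fin K → ℝ => fun i => g i / ∑ j, g j) ∘ Prod.fst) from rfl,
        ← Measure.map_map hnorm measurable_fst, Measure.map_fst_prod]
      simp only [measure_univ, one_smul]
      rfl
    · rw [Measure.map_map measurable_snd hF,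
        show (Prod.snd ∘ (fun q : (Fin K → ℝ) × (Fin K → ℝ) =>
          ((fun g : Fin K → ℝ => fun i => g i / ∑ j, g j) q.1,
           (fun g : Fin K → ℝ => fun i => g i / ∑ j, g j) (fun i => q.1 i + q.2 i))))
          = ((fun g : Fin K → ℝ => fun i => g i / ∑ j, g j)
            ∘ (fun q : (Fin K → ℝ) × (Fin K → ℝ) => fun i => q.1 i + q.2 i)) from rfl,
        ← Measure.map_map hnorm haddf]
      have hsnd : ((Measure.pi fun i => gammaMeasure (α i) 1).prod
            (Measure.pi fun i => nnGamma (m i : ℝ))).map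
            (fun q : (Fin K → ℝ) × (Fin K → ℝ) => fun i => q.1 i + q.2 i)
          = Measure.pi (fun i => gammaMeasure (α i + m i) 1) := by
        have harrow := measurePreserving_arrowProdEquivProdArrow ℝ ℝ (Fin K)
          (fun i => gammaMeasure (α i) 1) (fun i => nnGamma (m i : ℝ))
        rw [← harrow.map_eq, Measure.map_map haddf (MeasurableEquiv.measurable _)]
        have hpercoord : ∀ i : Fin K, MeasurePreserving (fun p : ℝ × ℝ => p.1 + p.2)
            ((gammaMeasure (α i) 1).prod (nnGamma (m i : ℝ)))
            (gammaMeasure (α i + m i) 1) := by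
          intro i
          refine ⟨measurable_fst.add measurable_snd, ?_⟩
          rw [show gammaMeasure (α i) 1 = nnGamma (α i) from (nnGamma_of_pos (hα i)).symm,
            nnGamma_conv (hα i).le (Nat.cast_nonneg _),
            nnGamma_of_pos (add_pos_of_pos_of_nonneg (hα i) (Nat.cast_nonneg _))]
        have hpi := measurePreserving_pi
          (fun i => (gammaMeasure (α i) 1).prod (nnGamma (m i : ℝ)))
          (fun i => gammaMeasure (α i + m i) 1) hpercoord
        exact hpi.map_eq
      rw [hsnd]
      rfl
    · -- the integral bound
      have hGae : ∀ᵐ q ∂((Measure.pi fun i => gammaMeasure (α i) 1).prod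
          (Measure.pi fun i => nnGamma (m i : ℝ))), ∀ i, q.1 i ∈ Set.Ioi (0:ℝ) := by
        refine ae_of_ae_map (p := fun g : Fin K → ℝ => ∀ i, g i ∈ Set.Ioi (0:ℝ))
          measurable_fst.aemeasurable ?_
        rw [Measure.map_fst_prod]
        simp only [measure_univ, one_smul]
        exact ae_pi_mem _ measurableSet_Ioi (fun i => gammaMeasure_ae_pos (hα i))
      have hEae : ∀ᵐ q ∂((Measure.pi fun i => gammaMeasure (α i) 1).prod
          (Measure.pi fun i => nnGamma (m i : ℝ))), ∀ i, q.2 i ∈ Set.Ici (0:ℝ) := by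
        refine ae_of_ae_map (p := fun g : Fin K → ℝ => ∀ i, g i ∈ Set.Ici (0:ℝ))
          measurable_snd.aemeasurable ?_
        rw [Measure.map_snd_prod]
        simp only [measure_univ, one_smul]
        exact ae_pi_mem _ measurableSet_Ici (fun i => nnGamma_ae_nonneg (Nat.cast_nonneg _))
      have hratio_meas : Measurable (fun q : (Fin K → ℝ) × (Fin K → ℝ) =>
          ENNReal.ofReal ((∑ j, q.2 j) / ((∑ j, q.1 j) + ∑ j, q.2 j))) := by
        apply ENNReal.measurable_ofReal.comp
        exact (Finset.measurable_sum _ fun j _ =>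
            (measurable_pi_apply j).comp measurable_snd).div
          ((Finset.measurable_sum _ fun j _ =>
            (measurable_pi_apply j).comp measurable_fst).add
           (Finset.measurable_sum _ fun j _ => (measurable_pi_apply j).comp measurable_snd))
      have hφ : Measurable (fun q : (Fin K → ℝ) × (Fin K → ℝ) =>
          ((∑ j, q.1 j, ∑ j, q.2 j) : ℝ × ℝ)) :=
        (Finset.measurable_sum _ fun j _ => (measurable_pi_apply j).comp measurable_fst).prodMk
          (Finset.measurable_sum _ fun j _ => (measurable_pi_apply j).comp measurable_snd)
      have hmapφ : ((Measure.pi fun i => gammaMeasure (α i) 1).prod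
            (Measure.pi fun i => nnGamma (m i : ℝ))).map
            (fun q : (Fin K → ℝ) × (Fin K → ℝ) => ((∑ j, q.1 j, ∑ j, q.2 j) : ℝ × ℝ))
          = (gammaMeasure A 1).prod (gammaMeasure S 1) := by
        have hsum : Measurable fun g : Fin K → ℝ => ∑ j, g j :=
          Finset.measurable_sum _ fun j _ => measurable_pi_apply j
        have h1 : (Measure.pi fun i => gammaMeasure (α i) 1).map
            (fun g : Fin K → ℝ => ∑ j, g j) = gammaMeasure A 1 := by
          have hrw : (Measure.pi fun i => gammaMeasure (α i) 1)
              = Measure.pi fun i => nnGamma (α i) := by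
            congr 1
            funext i
            rw [nnGamma_of_pos (hα i)]
          rw [hrw, nnGamma_sumPi _ (fun i => (hα i).le), nnGamma_of_pos hA]
        have h2 : (Measure.pi fun i => nnGamma (m i : ℝ)).map
            (fun g : Fin K → ℝ => ∑ j, g j) = gammaMeasure S 1 := by
          rw [nnGamma_sumPi _ (fun i => Nat.cast_nonneg _), nnGamma_of_pos hS]
        rw [show (fun q : (Fin K → ℝ) × (Fin K → ℝ) => ((∑ j, q.1 j, ∑ j, q.2 j) : ℝ × ℝ))
            = Prod.map (fun g : Fin K → ℝ => ∑ j, g j) (fun g : Fin K → ℝ => ∑ j, g j)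
            from rfl,
          ← Measure.map_prod_map _ _ hsum hsum, h1, h2]
      rw [integral_eq_lintegral_of_nonneg_ae
        (ae_of_all _ fun p => Finset.sum_nonneg fun i _ => abs_nonneg _)
        hfm.aestronglyMeasurable]
      have hlog0 : 0 ≤ 2 * Real.log (1 + S / A) := by
        have : (1:ℝ) ≤ 1 + S / A := by
          have : 0 ≤ S / A := by positivity
          linarith
        have := Real.log_nonneg this
        linarith
      refine ENNReal.toReal_le_of_le_ofReal hlog0 ?_
      calc (∫⁻ p, ENNReal.ofReal (∑ i, |p.1 i - p.2 i|)
            ∂(((Measure.pi fun i => gammaMeasure (α i) 1).prod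
              (Measure.pi fun i => nnGamma (m i : ℝ))).map
              (fun q => ((fun g : Fin K → ℝ => fun i => g i / ∑ j, g j) q.1,
               (fun g : Fin K → ℝ => fun i => g i / ∑ j, g j) (fun i => q.1 i + q.2 i)))))
          = ∫⁻ q, ENNReal.ofReal (∑ i,
              |q.1 i / (∑ j, q.1 j) - (q.1 i + q.2 i) / ∑ j, (q.1 j + q.2 j)|)
            ∂((Measure.pi fun i => gammaMeasure (α i) 1).prod
              (Measure.pi fun i => nnGamma (m i : ℝ))) := by
            exact lintegral_map (ENNReal.measurable_ofReal.comp hfm) hF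
        _ ≤ ∫⁻ q, ENNReal.ofReal (2 * ((∑ j, q.2 j) / ((∑ j, q.1 j) + ∑ j, q.2 j)))
            ∂((Measure.pi fun i => gammaMeasure (α i) 1).prod
              (Measure.pi fun i => nnGamma (m i : ℝ))) := by
            refine lintegral_mono_ae ?_
            filter_upwards [hGae, hEae] with q hq1 hq2
            apply ENNReal.ofReal_le_ofReal
            have hkey := key_ineq hK q.1 q.2 (fun i => hq1 i) (fun i => hq2 i)
            calc (∑ i, |q.1 i / (∑ j, q.1 j) - (q.1 i + q.2 i) / ∑ j, (q.1 j + q.2 j)|)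
                = ∑ i, |q.1 i / (∑ j, q.1 j)
                    - (q.1 i + q.2 i) / ((∑ j, q.1 j) + ∑ j, q.2 j)| := by
                  refine Finset.sum_congr rfl fun i _ => ?_
                  rw [Finset.sum_add_distrib]
              _ ≤ _ := hkey
        _ = ENNReal.ofReal 2 * ∫⁻ q, ENNReal.ofReal
              ((∑ j, q.2 j) / ((∑ j, q.1 j) + ∑ j, q.2 j))
            ∂((Measure.pi fun i => gammaMeasure (α i) 1).prod
              (Measure.pi fun i => nnGamma (m i : ℝ))) := by
            simp_rw [ENNReal.ofReal_mul (by norm_num : (0:ℝ) ≤ 2)]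
            rw [lintegral_const_mul _ hratio_meas]
        _ = ENNReal.ofReal 2 * ∫⁻ p : ℝ × ℝ, ENNReal.ofReal (p.2 / (p.1 + p.2))
            ∂((gammaMeasure A 1).prod (gammaMeasure S 1)) := by
            rw [← hmapφ, lintegral_map (by fun_prop) hφ]
        _ = ENNReal.ofReal 2 * ENNReal.ofReal (S / (A + S)) := by
            rw [lintegral_ratio hA hS]
        _ ≤ ENNReal.ofReal (2 * Real.log (1 + S / A)) := by
            rw [← ENNReal.ofReal_mul (by norm_num : (0:ℝ) ≤ 2)]
            apply ENNReal.ofReal_le_ofReal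
            have := ratio_le_log hA hS.le
            linarith
end

section
/- Let c : S × A × S → ℝ with |c| ≤ C̄, let γ ∈ (0,1), and define the Bellman operator (JV)(s) = min over a of β(σ(c(s,a,·) + γV(·), p(·|s,a))), where β is a coherent risk measure over a distribution on transition kernels p and σ(·, m) is a coherent risk measure with respect to the probability vector m. Then J is a γ-contraction in the sup norm: ‖J V₁ − J V₂‖_∞ ≤ γ‖V₁ − V₂‖_∞ for all bounded V₁, V₂ on the finite state space S. -/
/-- The risk-sensitive robust Bellman operator
`(J V)(s) = min_a β(p ↦ σ(c(s,a,·) + γ V(·), p(·|s,a)))`, built from a coherent outer risk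
measure `β` (over transition-kernel uncertainty) and a coherent risk transition mapping
`σ(·, m)`, is a `γ`-contraction in the sup norm. -/
theorem bellman_contraction {S A P : Type*} [Fintype S] [Nonempty S] [Fintype A] [Nonempty A]
    (c : S → A → S → ℝ) (Cbar : ℝ) (hc : ∀ s a s', |c s a s'| ≤ Cbar)
    (γ : ℝ) (hγ : γ ∈ Set.Ioo (0 : ℝ) 1)
    (ker : P → S → A → S → ℝ)
    (β : (P → ℝ) → ℝ)
    (hβpos : ∀ (r : ℝ) (f : P → ℝ), 0 ≤ r → β (fun p => r * f p) = r * β f)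
    (hβmono : ∀ f g : P → ℝ, (∀ p, f p ≤ g p) → β f ≤ β g)
    (hβtrans : ∀ (f : P → ℝ) (r : ℝ), β (fun p => f p + r) = β f + r)
    (hβsub : ∀ f g : P → ℝ, β (fun p => f p + g p) ≤ β f + β g)
    (σ : (S → ℝ) → (S → ℝ) → ℝ)
    (hσpos : ∀ (r : ℝ) (v m : S → ℝ), 0 ≤ r → σ (fun s' => r * v s') m = r * σ v m)
    (hσmono : ∀ v₁ v₂ m : S → ℝ, (∀ s', v₁ s' ≤ v₂ s') → σ v₁ m ≤ σ v₂ m)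
    (hσtrans : ∀ (v m : S → ℝ) (r : ℝ), σ (fun s' => v s' + r) m = σ v m + r)
    (hσsub : ∀ v₁ v₂ m : S → ℝ, σ (fun s' => v₁ s' + v₂ s') m ≤ σ v₁ m + σ v₂ m)
    (J : (S → ℝ) → S → ℝ)
    (hJ : ∀ V s, J V s
        = ⨅ a : A, β (fun p => σ (fun s' => c s a s' + γ * V s') (ker p s a)))
    (V₁ V₂ : S → ℝ) :
    (⨆ s, |J V₁ s - J V₂ s|) ≤ γ * ⨆ s, |V₁ s - V₂ s| := by
  obtain ⟨hγ0, hγ1⟩ := hγ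
  set M : ℝ := ⨆ s, |V₁ s - V₂ s| with hM
  have hVle : ∀ (W₁ W₂ : S → ℝ), (∀ s, |W₁ s - W₂ s| ≤ M) →
      ∀ s, J W₁ s - J W₂ s ≤ γ * M := by
    intro W₁ W₂ hW s
    rw [hJ, hJ]
    set g₁ : A → ℝ := fun a => β (fun p => σ (fun s' => c s a s' + γ * W₁ s') (ker p s a))
    set g₂ : A → ℝ := fun a => β (fun p => σ (fun s' => c s a s' + γ * W₂ s') (ker p s a))
    have hpt : ∀ a : A, g₁ a ≤ g₂ a + γ * M := by
      intro a
      have hσle : ∀ p : P,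
          σ (fun s' => c s a s' + γ * W₁ s') (ker p s a)
          ≤ σ (fun s' => c s a s' + γ * W₂ s') (ker p s a) + γ * M := by
        intro p
        have h1 : σ (fun s' => c s a s' + γ * W₁ s') (ker p s a)
            ≤ σ (fun s' => (c s a s' + γ * W₂ s') + γ * M) (ker p s a) := by
          apply hσmono
          intro s'
          have := hW s'
          have h2 : W₁ s' - W₂ s' ≤ M := (abs_le.mp this).2
          nlinarith
        calc σ (fun s' => c s a s' + γ * W₁ s') (ker p s a)
            ≤ σ (fun s' => (c s a s' + γ * W₂ s') + γ * M) (ker p s a) := h1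
          _ = σ (fun s' => c s a s' + γ * W₂ s') (ker p s a) + γ * M :=
              hσtrans _ _ _
      calc g₁ a ≤ β (fun p => σ (fun s' => c s a s' + γ * W₂ s') (ker p s a) + γ * M) :=
            hβmono _ _ hσle
        _ = g₂ a + γ * M := hβtrans _ _
    obtain ⟨a₀, ha₀⟩ := exists_eq_ciInf_of_finite (f := g₂)
    have h₁ : (⨅ a, g₁ a) ≤ g₁ a₀ := ciInf_le (Finite.bddBelow_range _) a₀
    have h₂ : g₁ a₀ ≤ g₂ a₀ + γ * M := hpt a₀
    have h₃ : g₂ a₀ = iInf g₂ := ha₀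
    have h₄ : iInf g₁ ≤ g₁ a₀ := h₁
    linarith
  have hMbd : ∀ s, |V₁ s - V₂ s| ≤ M := fun s =>
    le_ciSup (f := fun s => |V₁ s - V₂ s|) (Finite.bddAbove_range _) s
  have h12 := hVle V₁ V₂ hMbd
  have h21 := hVle V₂ V₁ (fun s => by rw [abs_sub_comm]; exact hMbd s)
  apply ciSup_le
  intro s
  rw [abs_le]
  constructor
  · have := h21 s; linarith
  · exact h12 s
end

section
/- Let σ(v,m) = min over y ∈ ℝ of { y + (1/α)·∑_{s'} (v(s') − y)⁺ m(s') } denote CVaR_α of the vector v under probability vector m on a finite set S. If ‖v‖_∞ ≤ C, then for any two probability vectors m₁, m₂ on S, |σ(v, m₁) − σ(v, m₂)| ≤ (2C/α)·∑_{s'} |m₁(s') − m₂(s')|. -/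
section CVaRAux

variable {S : Type*} [Fintype S] [Nonempty S]

/-- clamping `y` into `[-C, C]` does not increase the CVaR objective. -/
lemma cvar_clamp_le (α C : ℝ) (hα0 : 0 < α) (hα1 : α < 1) (hC : 0 ≤ C)
    (v : S → ℝ) (hv : ∀ s, |v s| ≤ C)
    (m : S → ℝ) (hm0 : ∀ s, 0 ≤ m s) (hm1 : ∑ s, m s = 1) (y : ℝ) :
    max (-C) (min C y) + (1/α) * ∑ s, max (v s - max (-C) (min C y)) 0 * m s
      ≤ y + (1/α) * ∑ s, max (v s - y) 0 * m s := by
  have hα0' : 0 < 1/α := by positivity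
  rcases le_or_gt y (-C) with h1 | h1
  · have hz : max (-C) (min C y) = -C := by
      rw [min_eq_right (h1.trans (by linarith)), max_eq_left h1]
    rw [hz]
    have e1 : ∑ s, max (v s - -C) 0 * m s = (∑ s, v s * m s) + C := by
      have : ∀ s : S, max (v s - -C) 0 * m s = v s * m s + C * m s := by
        intro s
        have := (abs_le.mp (hv s)).1
        rw [max_eq_left (by linarith)]; ring
      rw [Finset.sum_congr rfl fun s _ => this s, Finset.sum_add_distrib,
        ← Finset.mul_sum, hm1, mul_one]
    have e2 : ∑ s, max (v s - y) 0 * m s = (∑ s, v s * m s) - y := by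
      have : ∀ s : S, max (v s - y) 0 * m s = v s * m s - y * m s := by
        intro s
        have := (abs_le.mp (hv s)).1
        rw [max_eq_left (by linarith)]; ring
      rw [Finset.sum_congr rfl fun s _ => this s, Finset.sum_sub_distrib,
        ← Finset.mul_sum, hm1, mul_one]
    rw [e1, e2]
    have h2 : 1 < 1/α := by rw [lt_div_iff₀ hα0]; linarith
    nlinarith [mul_le_mul_of_nonneg_right (show C ≤ -y by linarith)
      (show (0:ℝ) ≤ 1/α - 1 by linarith)]
  · rcases le_or_gt C y with h2 | h2
    · have hz : max (-C) (min C y) = C := by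
        rw [min_eq_left h2, max_eq_right (by linarith)]
      rw [hz]
      have e1 : ∑ s, max (v s - C) 0 * m s = 0 := by
        refine Finset.sum_eq_zero fun s _ => ?_
        have := (abs_le.mp (hv s)).2
        rw [max_eq_right (by linarith)]; ring
      rw [e1]
      have : 0 ≤ ∑ s, max (v s - y) 0 * m s :=
        Finset.sum_nonneg fun s _ => mul_nonneg (le_max_right _ _) (hm0 s)
      nlinarith
    · have hz : max (-C) (min C y) = y := by
        rw [min_eq_right h2.le, max_eq_right h1.le]
      rw [hz]

lemma cvar_bddBelow (α C : ℝ) (hα0 : 0 < α) (hα1 : α < 1) (hC : 0 ≤ C)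
    (v : S → ℝ) (hv : ∀ s, |v s| ≤ C)
    (m : S → ℝ) (hm0 : ∀ s, 0 ≤ m s) (hm1 : ∑ s, m s = 1) :
    BddBelow (Set.range fun y : ℝ => y + (1/α) * ∑ s, max (v s - y) 0 * m s) := by
  refine ⟨-C, ?_⟩
  rintro _ ⟨y, rfl⟩
  have h := cvar_clamp_le α C hα0 hα1 hC v hv m hm0 hm1 y
  have hsum : 0 ≤ ∑ s, max (v s - max (-C) (min C y)) 0 * m s :=
    Finset.sum_nonneg fun s _ => mul_nonneg (le_max_right _ _) (hm0 s)
  have hα0' : 0 ≤ 1/α := by positivity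
  have : -C ≤ max (-C) (min C y) := le_max_left _ _
  nlinarith [mul_nonneg hα0' hsum]

lemma cvar_one_side (α C : ℝ) (hα0 : 0 < α) (hα1 : α < 1) (hC : 0 ≤ C)
    (v : S → ℝ) (hv : ∀ s, |v s| ≤ C)
    (m₁ m₂ : S → ℝ)
    (hm₁nonneg : ∀ s, 0 ≤ m₁ s) (hm₁sum : ∑ s, m₁ s = 1)
    (hm₂nonneg : ∀ s, 0 ≤ m₂ s) (hm₂sum : ∑ s, m₂ s = 1) :
    (⨅ y : ℝ, y + (1 / α) * ∑ s, max (v s - y) 0 * m₁ s)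
        - (⨅ y : ℝ, y + (1 / α) * ∑ s, max (v s - y) 0 * m₂ s)
      ≤ (2 * C / α) * ∑ s, |m₁ s - m₂ s| := by
  set K := (2 * C / α) * ∑ s, |m₁ s - m₂ s| with hK
  set f₁ := fun y : ℝ => y + (1/α) * ∑ s, max (v s - y) 0 * m₁ s with hf₁
  set f₂ := fun y : ℝ => y + (1/α) * ∑ s, max (v s - y) 0 * m₂ s with hf₂
  have hbdd₁ := cvar_bddBelow α C hα0 hα1 hC v hv m₁ hm₁nonneg hm₁sum
  have key : ∀ y : ℝ, (⨅ y, f₁ y) - K ≤ f₂ y := by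
    intro y
    set z := max (-C) (min C y) with hzdef
    have hzC : |z| ≤ C := by
      rw [abs_le]
      constructor
      · exact le_max_left _ _
      · exact max_le (by linarith) (min_le_left _ _)
    have h1 : (⨅ y, f₁ y) ≤ f₁ z := ciInf_le hbdd₁ z
    have h2 : f₁ z ≤ f₂ z + K := by
      have hterm : ∀ s, max (v s - z) 0 * m₁ s - max (v s - z) 0 * m₂ s
          ≤ 2 * C * |m₁ s - m₂ s| := by
        intro s
        have hg0 : (0:ℝ) ≤ max (v s - z) 0 := le_max_right _ _
        have hg2C : max (v s - z) 0 ≤ 2 * C := by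
          have h1 := (abs_le.mp (hv s)).2
          have h2 := (abs_le.mp hzC).1
          exact max_le (by linarith) (by linarith)
        calc max (v s - z) 0 * m₁ s - max (v s - z) 0 * m₂ s
            = max (v s - z) 0 * (m₁ s - m₂ s) := by ring
          _ ≤ |max (v s - z) 0 * (m₁ s - m₂ s)| := le_abs_self _
          _ = max (v s - z) 0 * |m₁ s - m₂ s| := by
              rw [abs_mul, abs_of_nonneg hg0]
          _ ≤ 2 * C * |m₁ s - m₂ s| :=
              mul_le_mul_of_nonneg_right hg2C (abs_nonneg _)
      have hsum : ∑ s, max (v s - z) 0 * m₁ s - ∑ s, max (v s - z) 0 * m₂ s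
          ≤ ∑ s, 2 * C * |m₁ s - m₂ s| := by
        rw [← Finset.sum_sub_distrib]
        exact Finset.sum_le_sum fun s _ => hterm s
      have hα0' : 0 ≤ 1/α := by positivity
      have : (1/α) * (∑ s, max (v s - z) 0 * m₁ s)
          ≤ (1/α) * (∑ s, max (v s - z) 0 * m₂ s) + (1/α) * ∑ s, 2 * C * |m₁ s - m₂ s| := by
        nlinarith [mul_le_mul_of_nonneg_left hsum hα0']
      have hKeq : (1/α) * ∑ s, 2 * C * |m₁ s - m₂ s| = K := by
        rw [hK, ← Finset.mul_sum]; ring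
      simp only [hf₁, hf₂]
      linarith [hKeq ▸ this]
    have h3 : f₂ z ≤ f₂ y :=
      cvar_clamp_le α C hα0 hα1 hC v hv m₂ hm₂nonneg hm₂sum y
    linarith
  have := le_ciInf key
  linarith

end CVaRAux

/-- CVaR as a risk transition mapping,
`σ(v, m) = min_y { y + (1/α) ∑_{s'} (v s' - y)⁺ m s' }`, is Lipschitz in the probability
vector `m`: if `‖v‖_∞ ≤ C` then
`|σ(v, m₁) - σ(v, m₂)| ≤ (2C/α) ∑_{s'} |m₁ s' - m₂ s'|`. -/
theorem cvar_lipschitz_in_measure {S : Type*} [Fintype S] [Nonempty S]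
    (α : ℝ) (hα : α ∈ Set.Ioo (0 : ℝ) 1)
    (C : ℝ) (v : S → ℝ) (hv : ∀ s, |v s| ≤ C)
    (m₁ m₂ : S → ℝ)
    (hm₁nonneg : ∀ s, 0 ≤ m₁ s) (hm₁sum : ∑ s, m₁ s = 1)
    (hm₂nonneg : ∀ s, 0 ≤ m₂ s) (hm₂sum : ∑ s, m₂ s = 1) :
    |(⨅ y : ℝ, y + (1 / α) * ∑ s, max (v s - y) 0 * m₁ s)
        - ⨅ y : ℝ, y + (1 / α) * ∑ s, max (v s - y) 0 * m₂ s|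
      ≤ (2 * C / α) * ∑ s, |m₁ s - m₂ s| := by
  obtain ⟨hα0, hα1⟩ := hα
  have hC : 0 ≤ C := le_trans (abs_nonneg _) (hv (Classical.arbitrary S))
  rw [abs_sub_le_iff]
  constructor
  · exact cvar_one_side α C hα0 hα1 hC v hv m₁ m₂ hm₁nonneg hm₁sum hm₂nonneg hm₂sum
  · have h := cvar_one_side α C hα0 hα1 hC v hv m₂ m₁ hm₂nonneg hm₂sum hm₁nonneg hm₁sum
    have : ∑ s, |m₂ s - m₁ s| = ∑ s, |m₁ s - m₂ s| :=
      Finset.sum_congr rfl fun s _ => abs_sub_comm _ _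
    linarith [this ▸ h]
end

section
/- Let J_1 and J_2 be γ-contractions in sup norm with fixed points V_1* and V_2*, and suppose the pointwise deviation bound |J_1 V(s) − J_2 V(s)| ≤ ε holds for all V with ‖V‖_∞ ≤ C̄/(1−γ) and all s. Then ‖V_1* − V_2*‖_∞ ≤ ε/(1−γ). In particular (Theorem on posterior error), if the one-step Bellman operators under posterior χ and under the true kernel δ_q̄ differ by at most B_σ·max_{s,a} β_{p∼χ}(∑_{s'} |p(s'|s,a) − q̄(s'|s,a)|) on all admissible value functions, then ‖V*_χ − V*_{δ_q̄}‖_∞ ≤ (B_σ/(1−γ))·max_{s,a} β_{p∼χ}(∑_{s'} |p(s'|s,a) − q̄(s'|s,a)|). -/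
/-- Posterior error bound: if `J₁` and `J₂` are `γ`-contractions in sup norm whose fixed
points `V₁*`, `V₂*` lie in the ball of radius `C̄/(1-γ)`, and
`|J₁ V s - J₂ V s| ≤ ε` for all admissible value functions `V` (those with
`‖V‖_∞ ≤ C̄/(1-γ)`) and all states `s`, then `‖V₁* - V₂*‖_∞ ≤ ε / (1 - γ)`.
In the risk-sensitive robust MDP, with
`ε = B_σ · max_{s,a} β_{p∼χ}(∑_{s'} |p(s'|s,a) - q̄(s'|s,a)|)`, this is the posterior
error bound `‖V*_χ - V*_{δ_q̄}‖_∞ ≤ (B_σ/(1-γ)) · max_{s,a} β_{p∼χ}(∑_{s'} |p - q̄|)`. -/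
theorem posterior_error_bound {S : Type*} [Fintype S] [Nonempty S]
    (γ : ℝ) (hγ : γ ∈ Set.Ioo (0 : ℝ) 1) (Cbar : ℝ)
    (J₁ J₂ : (S → ℝ) → S → ℝ)
    (hJ₁ : ∀ V₁ V₂ : S → ℝ, ‖J₁ V₁ - J₁ V₂‖ ≤ γ * ‖V₁ - V₂‖)
    (hJ₂ : ∀ V₁ V₂ : S → ℝ, ‖J₂ V₁ - J₂ V₂‖ ≤ γ * ‖V₁ - V₂‖)
    (V₁star V₂star : S → ℝ)
    (hfix₁ : J₁ V₁star = V₁star) (hfix₂ : J₂ V₂star = V₂star)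
    (hball₁ : ‖V₁star‖ ≤ Cbar / (1 - γ)) (hball₂ : ‖V₂star‖ ≤ Cbar / (1 - γ))
    (ε : ℝ)
    (hdev : ∀ V : S → ℝ, ‖V‖ ≤ Cbar / (1 - γ) → ∀ s, |J₁ V s - J₂ V s| ≤ ε) :
    ‖V₁star - V₂star‖ ≤ ε / (1 - γ) := by
  obtain ⟨hγ0, hγ1⟩ := hγ
  have hεpos : (0:ℝ) ≤ ε := le_trans (abs_nonneg _) (hdev V₂star hball₂ (Classical.arbitrary S))
  have hstep : ‖J₁ V₂star - J₂ V₂star‖ ≤ ε := by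
    apply pi_norm_le_iff_of_nonneg hεpos |>.2
    intro s
    simpa using hdev V₂star hball₂ s
  have key : ‖V₁star - V₂star‖ ≤ γ * ‖V₁star - V₂star‖ + ε := by
    calc ‖V₁star - V₂star‖ = ‖(J₁ V₁star - J₁ V₂star) + (J₁ V₂star - J₂ V₂star)‖ := by
          rw [hfix₁] at *; rw [hfix₂] at *; ring_nf
      _ ≤ ‖J₁ V₁star - J₁ V₂star‖ + ‖J₁ V₂star - J₂ V₂star‖ := norm_add_le _ _
      _ ≤ γ * ‖V₁star - V₂star‖ + ε := add_le_add (hJ₁ _ _) hstep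
  have h1γ : (0:ℝ) < 1 - γ := by linarith
  rw [le_div_iff₀ h1γ]
  nlinarith [norm_nonneg (V₁star - V₂star)]
end
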